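/- There exists a sequential plurality voting profile with 3 alternatives and 4 voters plus a deterministic tie-breaking order in which one alternative is a Condorcet winner but a different alternative is elected in the unique subgame-perfect equilibrium outcome. Concretely: alternatives {A,B,C}; preferences Voter 1: C≻A≻B, Voter 2: A≻C≻B, Voter 3: A≻C≻B, Voter 4: B≻A≻C; tie-break order C≻B≻A. Then A is a Condorcet winner, yet C is elected. -/

import Mathlib

open Classical

/-- `maxWrt worse s` picks the element of `s` that every other element of `s` is `worse` than. -/
noncomputable def maxWrt {O : Type} [Nonempty O] (worse : O → O → Prop) (s : Finset O) : O :=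
  if h : ∃ o ∈ s, ∀ o' ∈ s, o' ≠ o → worse o' o then h.choose else Classical.arbitrary O

/-- Backward-induction (subgame perfect) outcome of a sequential game with `n` remaining movers,
`worse k` the strict "is worse than" relation of the `k`-th mover on outcomes. -/
noncomputable def speOut {B O : Type} [Fintype B] [Nonempty O]
    (worse : ℕ → O → O → Prop) (outcome : List B → O) : ℕ → List B → O
  | 0, h => outcome h
  | n+1, h => maxWrt (worse h.length)
      (Finset.univ.image (fun b => speOut worse outcome n (h ++ [b])))

/-- number of ballots approving `x`. -/
def votes {m : ℕ} (h : List (Finset (Fin m))) (x : Fin m) : ℕ :=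
  h.countP (fun b => decide (x ∈ b))

/-- set of alternatives with the maximal number of votes. -/
def winSet {m : ℕ} (h : List (Finset (Fin m))) : Finset (Fin m) :=
  Finset.univ.filter (fun x => ∀ y, votes h y ≤ votes h x)

/-- deterministic tie-breaking: the member of the winning set with least tie-break rank. -/
noncomputable def detWinner {m : ℕ} [Nonempty (Fin m)] (tb : Fin m → ℕ)
    (h : List (Finset (Fin m))) : Fin m :=
  maxWrt (fun y x => tb x < tb y) (winSet h)

def topRank {m : ℕ} (r : Fin m → ℕ) (S : Finset (Fin m)) : WithTop ℕ := (S.image r).min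

/-- remove the most preferred element. -/
def shed {m : ℕ} (r : Fin m → ℕ) (S : Finset (Fin m)) : Finset (Fin m) :=
  S.filter (fun a => (r a : WithTop ℕ) ≠ topRank r S)

/-- the lifted strict preference on subsets: better top, or equal top and smaller,
or equal top and equal size and recursively better after removing the tops. -/
def liftBetter {m : ℕ} (r : Fin m → ℕ) : ℕ → Finset (Fin m) → Finset (Fin m) → Prop
  | 0, _, _ => False
  | fuel+1, S, S' =>
    topRank r S < topRank r S' ∨
    (topRank r S = topRank r S' ∧ S.card < S'.card) ∨
    (topRank r S = topRank r S' ∧ S.card = S'.card ∧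
      liftBetter r fuel (shed r S) (shed r S'))

/-- `x` beats `y` in pairwise majority comparison. -/
def beats {n m : ℕ} (prof : Fin n → Fin m → ℕ) (x y : Fin m) : Prop :=
  (Finset.univ.filter (fun i => prof i x < prof i y)).card >
  (Finset.univ.filter (fun i => prof i y < prof i x)).card

/-- uniqueness check for `maxWrt`. -/
def okMax {O : Type} [DecidableEq O] (worse : O → O → Bool) (s : Finset O) : Bool :=
  decide ((s.filter (fun o => ∀ o' ∈ s, o' ≠ o → worse o' o)).card = 1)

/-- computable analogue of `maxWrt` for decidable `worse`. -/
def maxWrtC {O : Type} [DecidableEq O] [LinearOrder O] [Inhabited O]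
    (worse : O → O → Bool) (s : Finset O) : O :=
  let T := s.filter (fun o => ∀ o' ∈ s, o' ≠ o → worse o' o)
  if h : T.Nonempty then T.min' h else default

lemma maxWrt_eq_maxWrtC {O : Type} [DecidableEq O] [LinearOrder O] [Inhabited O] [Nonempty O]
    (worse' : O → O → Prop) (worse : O → O → Bool)
    (hw : ∀ x y, worse' x y ↔ worse x y = true) (s : Finset O)
    (hc : okMax worse s = true) :
    maxWrt worse' s = maxWrtC worse s := by
  have hc' : (s.filter (fun o => ∀ o' ∈ s, o' ≠ o → worse o' o)).card = 1 :=
    of_decide_eq_true hc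
  obtain ⟨a, ha⟩ := Finset.card_eq_one.mp hc'
  have haf : a ∈ s.filter (fun o => ∀ o' ∈ s, o' ≠ o → worse o' o) := by
    rw [ha]; exact Finset.mem_singleton_self a
  rw [Finset.mem_filter] at haf
  have hex : ∃ o ∈ s, ∀ o' ∈ s, o' ≠ o → worse' o' o :=
    ⟨a, haf.1, fun o' ho' hne => (hw o' a).2 (haf.2 o' ho' hne)⟩
  have h1 : maxWrt worse' s = a := by
    rw [maxWrt, dif_pos hex]
    obtain ⟨hmem, hprop⟩ := hex.choose_spec
    have : hex.choose ∈ s.filter (fun o => ∀ o' ∈ s, o' ≠ o → worse o' o) :=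
      Finset.mem_filter.mpr ⟨hmem, fun o' ho' hne => (hw o' _).1 (hprop o' ho' hne)⟩
    rw [ha, Finset.mem_singleton] at this
    exact this
  have h2 : maxWrtC worse s = a := by
    unfold maxWrtC
    simp only [ha]
    rw [dif_pos ⟨a, Finset.mem_singleton_self a⟩]
    exact Finset.min'_singleton a
  rw [h1, h2]

/-- computable analogue of `speOut`. -/
def speOutC {B O : Type} [Fintype B] [DecidableEq O] [LinearOrder O] [Inhabited O]
    (worse : ℕ → O → O → Bool) (outcomeC : List B → O) (n : ℕ) (h : List B) : O :=
  match n with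
  | 0 => outcomeC h
  | n+1 => maxWrtC (worse h.length)
      (Finset.univ.image (fun b => speOutC worse outcomeC n (h ++ [b])))

/-- validity check: at every node the `maxWrt` choice exists uniquely. -/
def okNode {B O : Type} [Fintype B] [DecidableEq B] [DecidableEq O] [LinearOrder O] [Inhabited O]
    (worse : ℕ → O → O → Bool) (outcomeC : List B → O) (okOut : List B → Bool)
    (n : ℕ) (h : List B) : Bool :=
  match n with
  | 0 => okOut h
  | n+1 =>
    (decide (∀ b : B, okNode worse outcomeC okOut n (h ++ [b]) = true)) &&
    okMax (worse h.length)
      (Finset.univ.image (fun b => speOutC worse outcomeC n (h ++ [b])))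

lemma speOut_eq_speOutC {B O : Type} [Fintype B] [DecidableEq B] [DecidableEq O]
    [LinearOrder O] [Inhabited O] [Nonempty O]
    (worse' : ℕ → O → O → Prop) (worse : ℕ → O → O → Bool)
    (hw : ∀ k x y, worse' k x y ↔ worse k x y = true)
    (outcome outcomeC : List B → O) (okOut : List B → Bool)
    (hout : ∀ h, okOut h = true → outcome h = outcomeC h) :
    ∀ n h, okNode worse outcomeC okOut n h = true →
      speOut worse' outcome n h = speOutC worse outcomeC n h := by
  intro n
  induction n with
  | zero => intro h hok; exact hout h hok
  | succ n ih =>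
    intro h hok
    have hok' : ((decide (∀ b : B, okNode worse outcomeC okOut n (h ++ [b]) = true)) &&
        okMax (worse h.length)
          (Finset.univ.image (fun b => speOutC worse outcomeC n (h ++ [b])))) = true := hok
    rw [Bool.and_eq_true, decide_eq_true_iff] at hok'
    have himg : (Finset.univ.image (fun b => speOut worse' outcome n (h ++ [b]))) =
        (Finset.univ.image (fun b => speOutC worse outcomeC n (h ++ [b]))) := by
      congr 1
      funext b
      exact ih (h ++ [b]) (hok'.1 b)
    rw [speOut, speOutC]
    rw [Subsingleton.elim (α := DecidableEq O) (fun a b => Classical.propDecidable (a = b))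
      inferInstance]
    rw [himg]
    exact maxWrt_eq_maxWrtC (worse' h.length) (worse h.length) (hw h.length) _ hok'.2

/-- computable analogue of `detWinner`. -/
def detWinnerC {m : ℕ} [NeZero m] (tb : Fin m → ℕ) (h : List (Finset (Fin m))) : Fin m :=
  maxWrtC (fun y x => decide (tb x < tb y)) (winSet h)

set_option maxHeartbeats 4000000 in
/-- Condorcet winner paradox in sequential plurality voting with deterministic
tie-breaking: 3 alternatives A=0, B=1, C=2, 4 voters
(C≻A≻B, A≻C≻B, A≻C≻B, B≻A≻C), tie-break order C≻B≻A.
A is a Condorcet winner but C is elected in the SPE. -/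
theorem condorcet_winner_paradox_plurality_deterministic :
    let prof : Fin 4 → Fin 3 → ℕ := ![![1,2,0], ![0,2,1], ![0,2,1], ![1,0,2]]
    let tb : Fin 3 → ℕ := ![2,1,0]
    (∀ y : Fin 3, y ≠ 0 → beats prof 0 y) ∧
    speOut (fun i (x y : Fin 3) => prof (Fin.ofNat 4 i) y < prof (Fin.ofNat 4 i) x)
      (fun h : List (Option (Fin 3)) => detWinner tb (h.map Option.toFinset)) 4 [] = 2 := by
  intro prof tb
  constructor
  · intro y hy
    fin_cases y
    · exact absurd rfl hy
    · unfold beats; decide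
    · unfold beats; decide
  · have hout : ∀ h : List (Option (Fin 3)),
        okMax (fun y x => decide (tb x < tb y)) (winSet (h.map Option.toFinset)) = true →
        detWinner tb (h.map Option.toFinset) = detWinnerC tb (h.map Option.toFinset) := by
      intro h hk
      unfold detWinner detWinnerC
      exact maxWrt_eq_maxWrtC _ _ (fun x y => by simp) _ hk
    rw [speOut_eq_speOutC (fun i (x y : Fin 3) => prof (Fin.ofNat 4 i) y < prof (Fin.ofNat 4 i) x)
        (fun i (x y : Fin 3) => decide (prof (Fin.ofNat 4 i) y < prof (Fin.ofNat 4 i) x))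
        (fun k x y => by simp)
        (fun h : List (Option (Fin 3)) => detWinner tb (h.map Option.toFinset))
        (fun h => detWinnerC tb (h.map Option.toFinset))
        (fun h => okMax (fun y x => decide (tb x < tb y)) (winSet (h.map Option.toFinset)))
        hout 4 [] (by decide)]
    decide
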